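/- (S_finish, S_3, [0,1], [1/4, 1/2))↓ holds: from every configuration in which robot r is in state S_finish with observed distance in [0,1] and robot s is in state S_3 with observed distance in [1/4, 1/2), every fair SSynch execution of Algorithm 1 solves rendezvous. -/
import Mathlib


/-- Points in the plane. -/
abbrev Pt := EuclideanSpace ℝ (Fin 2)

/-- Observed directions. -/
inductive Dir | left | right
deriving DecidableEq

/-- The six internal states of Algorithm 1. -/
inductive St | start | s1 | s2 (d : Dir) | s3 | finish
deriving DecidableEq

/-- A local coordinate frame: an orthogonal linear map of the plane. -/
abbrev Frame := Pt ≃ₗᵢ[ℝ] Pt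

/-- Observed direction of a local vector `v`: `right` if its first coordinate is
positive, or is zero with positive second coordinate; `left` otherwise. -/
noncomputable def obsDir (v : Pt) : Dir :=
  if 0 < v 0 ∨ (v 0 = 0 ∧ 0 < v 1) then Dir.right else Dir.left

/-- Local vector observed by a robot with unit distance `u` and frame `A`,
located at `p`, looking at the other robot at `q`. -/
noncomputable def obsVec (u : ℝ) (A : Frame) (p q : Pt) : Pt := u⁻¹ • (A (q - p))

/-- Observed distance. -/
noncomputable def obsDist (u : ℝ) (p q : Pt) : ℝ := ‖q - p‖ / u

/-- Algorithm 1: given the current state, the observed distance `d` and the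
observed direction `dir`, returns the new state and the coefficient `μ` such
that the (global) destination is `p + μ • (q - p)` (i.e. local destination `μ • v`). -/
noncomputable def algo1 (s : St) (d : ℝ) (dir : Dir) : St × ℝ :=
  if d = 0 then (s, 0)
  else match s with
  | .start => if d < 1 then (.s1, 1 - 1/d) else (.s2 dir, 1)
  | .s1 => if d ≤ 1 then (.finish, 0) else (.s2 dir, 1)
  | .s2 d' =>
      if dir = d' then (.finish, 1)
      else if d < 1/2 then (.finish, 0)
      else if d < 1 then (.s3, 1/2)
      else (.s2 d', 1/2)
  | .s3 => if d < 1/4 then (.finish, 0) else (.finish, 1)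
  | .finish => if d ≤ 1 then (.finish, 0) else (.finish, 1)

/-- A configuration: positions and internal states of the two robots
(robot `r` is `false`, robot `s` is `true`). -/
structure Config where
  pos : Bool → Pt
  st : Bool → St

/-- Result (new position, new state) of one activation of robot `i`. -/
noncomputable def stepRobot (u : Bool → ℝ) (A : Bool → Frame) (c : Config) (i : Bool) :
    Pt × St :=
  let p := c.pos i
  let q := c.pos (!i)
  let d := obsDist (u i) p q
  let dir := obsDir (obsVec (u i) (A i) p q)
  let r := algo1 (c.st i) d dir
  (p + r.2 • (q - p), r.1)

/-- One synchronous round in which exactly the robots `i` with `act i = true`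
are activated; both activated robots observe the same (pre-round) configuration,
and rigidly reach their computed destinations. -/
noncomputable def stepConfig (u : Bool → ℝ) (A : Bool → Frame) (act : Bool → Bool)
    (c : Config) : Config where
  pos i := if act i then (stepRobot u A c i).1 else c.pos i
  st i := if act i then (stepRobot u A c i).2 else c.st i

/-- The configuration after `n` rounds of the SSynch execution of Algorithm 1
under schedule `sched`, starting from `c0`. -/
noncomputable def run (u : Bool → ℝ) (A : Bool → Frame) (sched : ℕ → Bool → Bool)
    (c0 : Config) : ℕ → Config
  | 0 => c0
  | n + 1 => stepConfig u A (sched n) (run u A sched c0 n)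

/-- A legal fair SSynch schedule: at every round a nonempty set of robots is
activated, and each robot is activated infinitely often. -/
def FairSched (sched : ℕ → Bool → Bool) : Prop :=
  (∀ n, sched n false = true ∨ sched n true = true) ∧
  (∀ i n, ∃ m, n ≤ m ∧ sched m i = true)

/-- Rendezvous is solved: from some round on, the two robots occupy the same
point and never move again. -/
noncomputable def Solves (u : Bool → ℝ) (A : Bool → Frame) (sched : ℕ → Bool → Bool)
    (c0 : Config) : Prop :=
  ∃ N : ℕ, ∀ n, N ≤ n → ∀ i, (run u A sched c0 n).pos i = (run u A sched c0 N).pos false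

/-- Conditions on a robot: one of the six internal states, or `S₂⁼` / `S₂≠`. -/
inductive Cond | start | s1 | s2 (d : Dir) | s2eq | s2ne | s3 | finish

/-- A robot in state `s` whose currently observed direction is `dir`
satisfies the condition. -/
def Cond.sat : Cond → St → Dir → Prop
  | .start, s, _ => s = .start
  | .s1, s, _ => s = .s1
  | .s2 d', s, _ => s = .s2 d'
  | .s2eq, s, dir => s = .s2 dir
  | .s2ne, s, dir => ∃ d', s = St.s2 d' ∧ d' ≠ dir
  | .s3, s, _ => s = .s3
  | .finish, s, _ => s = .finish

/-- `(S_a, S_b, I_a, I_b)↓` : for every choice of the units and frames, from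
every configuration in which robot `r` satisfies condition `Ca` with observed
distance in `Ia` and robot `s` satisfies condition `Cb` with observed distance
in `Ib`, every fair SSynch execution of Algorithm 1 solves Rendezvous. -/
noncomputable def Down (Ca Cb : Cond) (Ia Ib : Set ℝ) : Prop :=
  ∀ (u : Bool → ℝ) (A : Bool → Frame), (∀ i, 0 < u i) →
    ∀ c0 : Config,
      Ca.sat (c0.st false)
        (obsDir (obsVec (u false) (A false) (c0.pos false) (c0.pos true))) →
      obsDist (u false) (c0.pos false) (c0.pos true) ∈ Ia →
      Cb.sat (c0.st true)
        (obsDir (obsVec (u true) (A true) (c0.pos true) (c0.pos false))) →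
      obsDist (u true) (c0.pos true) (c0.pos false) ∈ Ib →
      ∀ sched : ℕ → Bool → Bool, FairSched sched → Solves u A sched c0


lemma algo1_zero (s : St) (dir : Dir) : algo1 s 0 dir = (s, 0) := by
  cases s <;> simp [algo1]

lemma stepConfig_pos_eq (u : Bool → ℝ) (A : Bool → Frame) (act : Bool → Bool) (c : Config)
    (h : c.pos false = c.pos true) (i : Bool) :
    (stepConfig u A act c).pos i = c.pos i := by
  have key : ∀ j, (stepRobot u A c j).1 = c.pos j := by
    intro j
    have hq : c.pos (!j) = c.pos j := by cases j <;> simp [h]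
    simp [stepRobot, hq, obsDist, algo1_zero]
  simp only [stepConfig]
  split <;> simp [key]

lemma run_const (u : Bool → ℝ) (A : Bool → Frame) (sched : ℕ → Bool → Bool) (c0 : Config)
    (k : ℕ) (h : (run u A sched c0 k).pos false = (run u A sched c0 k).pos true) :
    ∀ n, k ≤ n → ∀ i, (run u A sched c0 n).pos i = (run u A sched c0 k).pos false := by
  intro n hn
  induction n, hn using Nat.le_induction with
  | base =>
    intro i
    cases i
    · rfl
    · exact h.symm
  | succ n hn ih =>
    intro i
    have heq : (run u A sched c0 n).pos false = (run u A sched c0 n).pos true := by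
      rw [ih false, ih true]
    show (stepConfig u A (sched n) (run u A sched c0 n)).pos i = _
    rw [stepConfig_pos_eq _ _ _ _ heq i, ih i]

/-- Lemma 3: `(S_finish, S_3, [0,1], [1/4, 1/2))↓`. -/
theorem lemma_l4 :
    Down Cond.finish Cond.s3 (Set.Icc (0 : ℝ) 1) (Set.Ico (1/4 : ℝ) (1/2)) := by
  intro u A hu c0 hr hdr hs hds sched hfair
  simp only [Cond.sat] at hr hs
  set p := c0.pos false with hp0
  set q := c0.pos true with hq0
  obtain ⟨hds1, hds2⟩ := hds
  obtain ⟨hdr1, hdr2⟩ := hdr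
  have hus := hu true
  have hur := hu false
  have hne : p ≠ q := by
    intro h
    rw [obsDist, h, sub_self, norm_zero, zero_div] at hds1
    linarith
  have hnorm : (0:ℝ) < ‖q - p‖ := by
    rw [norm_pos_iff, sub_ne_zero]; exact fun h => hne h.symm
  have hdrne : obsDist (u false) p q ≠ 0 := by
    rw [obsDist]; positivity
  have hdsne : obsDist (u true) q p ≠ 0 := by
    rw [obsDist]
    have : (0:ℝ) < ‖p - q‖ := by
      rw [norm_pos_iff, sub_ne_zero]; exact hne
    positivity
  -- computation of one activation in an "A-configuration"
  have comp_r : ∀ c : Config, c.pos false = p → c.pos true = q → c.st false = St.finish →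
      stepRobot u A c false = (p, St.finish) := by
    intro c hcp hcq hcs
    have : algo1 St.finish (obsDist (u false) p q)
        (obsDir (obsVec (u false) (A false) p q)) = (St.finish, 0) := by
      rw [algo1]; simp [hdrne, hdr2]
    simp [stepRobot, hcp, hcq, hcs, this]
  have comp_s : ∀ c : Config, c.pos false = p → c.pos true = q → c.st true = St.s3 →
      stepRobot u A c true = (p, St.finish) := by
    intro c hcp hcq hcs
    have hlt : ¬ obsDist (u true) q p < 1/4 := not_lt.mpr hds1
    have : algo1 St.s3 (obsDist (u true) q p)
        (obsDir (obsVec (u true) (A true) q p)) = (St.finish, 1) := by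
      rw [algo1]; simp [hdsne, hlt]; linarith
    simp [stepRobot, hcp, hcq, hcs, this]
  -- the invariant
  have inv : ∀ n, ((run u A sched c0 n).pos false = p ∧ (run u A sched c0 n).st false = St.finish ∧
      (run u A sched c0 n).pos true = q ∧ (run u A sched c0 n).st true = St.s3) ∨
      (∀ i, (run u A sched c0 n).pos i = p) := by
    intro n
    induction n with
    | zero => exact Or.inl ⟨rfl, hr, rfl, hs⟩
    | succ n ih =>
      rcases ih with ⟨h1, h2, h3, h4⟩ | hB
      · -- case A
        show _ ∨ ∀ i, (stepConfig u A (sched n) (run u A sched c0 n)).pos i = p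
        by_cases hst : sched n true = true
        · refine Or.inr fun i => ?_
          cases i
          · simp only [stepConfig]
            split
            · rw [comp_r _ h1 h3 h2]
            · exact h1
          · simp only [stepConfig, hst, if_pos]
            rw [comp_s _ h1 h3 h4]
        · refine Or.inl ?_
          have hstf : sched n true = false := by simpa using hst
          refine ⟨?_, ?_, ?_, ?_⟩
          · show (stepConfig u A (sched n) (run u A sched c0 n)).pos false = p
            simp only [stepConfig]
            split
            · rw [comp_r _ h1 h3 h2]
            · exact h1
          · show (stepConfig u A (sched n) (run u A sched c0 n)).st false = St.finish
            simp only [stepConfig]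
            split
            · rw [comp_r _ h1 h3 h2]
            · exact h2
          · show (stepConfig u A (sched n) (run u A sched c0 n)).pos true = q
            simp [stepConfig, hstf, h3]
          · show (stepConfig u A (sched n) (run u A sched c0 n)).st true = St.s3
            simp [stepConfig, hstf, h4]
      · -- case B: positions stay equal
        refine Or.inr fun i => ?_
        show (stepConfig u A (sched n) (run u A sched c0 n)).pos i = p
        rw [stepConfig_pos_eq _ _ _ _ (by rw [hB false, hB true]) i]
        exact hB i
  -- fairness: s is activated at some round m
  obtain ⟨m, -, hm⟩ := hfair.2 true 0
  -- at round m+1, positions coincide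
  have hB : ∀ i, (run u A sched c0 (m+1)).pos i = p := by
    rcases inv m with ⟨h1, h2, h3, h4⟩ | hB
    · intro i
      cases i
      · show (stepConfig u A (sched m) (run u A sched c0 m)).pos false = p
        simp only [stepConfig]
        split
        · rw [comp_r _ h1 h3 h2]
        · exact h1
      · show (stepConfig u A (sched m) (run u A sched c0 m)).pos true = p
        simp only [stepConfig, hm, if_pos]
        rw [comp_s _ h1 h3 h4]
    · intro i
      show (stepConfig u A (sched m) (run u A sched c0 m)).pos i = p
      rw [stepConfig_pos_eq _ _ _ _ (by rw [hB false, hB true]) i]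
      exact hB i
  refine ⟨m + 1, fun n hn i => ?_⟩
  have := run_const u A sched c0 (m+1) (by rw [hB false, hB true]) n hn i
  rw [this]
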